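/- Let (E^X_t)_{t∈ℤ} and (E^Y_t)_{t∈ℤ} be jointly independent families of i.i.d. real standard Gaussian random variables, let α, β, γ be real with |α| < 1, |γ| < 1, α ≠ γ, and let Y_{t+1} := Σ_{k=0}^∞ γ^k E^Y_{t−k} + β Σ_{k=0}^∞ ((α^{k+1} − γ^{k+1})/(α − γ)) E^X_{t−1−k} (convergence in L²). Then 𝕍[Y_{t+1}] = 1/(1−γ²) + β²(1 + αγ)/((1−α²)(1−αγ)(1−γ²)). -/

import Mathlib

open MeasureTheory ProbabilityTheory Filter


open scoped ENNReal NNReal Topology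
open MeasureTheory ProbabilityTheory Filter Real

lemma aux_exp_int : Integrable (fun x : ℝ => rexp (-x^2/2)) := by
  have := integrable_exp_neg_mul_sq (by norm_num : (0:ℝ) < 1/2)
  refine this.congr ?_
  filter_upwards with x
  ring_nf

lemma aux_x2_exp_int : Integrable (fun x : ℝ => x^2 * rexp (-x^2/2)) := by
  have := integrable_rpow_mul_exp_neg_mul_sq (by norm_num : (0:ℝ) < 1/2)
    (by norm_num : (-1:ℝ) < 2)
  refine this.congr ?_
  filter_upwards with x
  rw [show ((2:ℝ)) = ((2:ℕ):ℝ) by norm_num, Real.rpow_natCast]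
  ring_nf

lemma aux_x_exp_int : Integrable (fun x : ℝ => x * rexp (-x^2/2)) := by
  have := integrable_mul_exp_neg_mul_sq (by norm_num : (0:ℝ) < 1/2)
  refine this.congr ?_
  filter_upwards with x
  ring_nf
open MeasureTheory ProbabilityTheory Filter Real

lemma aux_exp_eval : (∫ x : ℝ, rexp (-x^2/2)) = Real.sqrt (2*π) := by
  have := integral_gaussian (1/2)
  rw [show π / (1/2) = 2 * π by ring] at this
  rw [← this]
  congr 1 with x
  ring_nf

open MeasureTheory ProbabilityTheory Filter Real
open scoped Topology

lemma aux_tend : Tendsto (fun x : ℝ => |x| * rexp (-x^2/2)) (Filter.cocompact ℝ) (𝓝 0) := by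
  have := tendsto_rpow_abs_mul_exp_neg_mul_sq_cocompact (by norm_num : (0:ℝ) < 1/2) 1
  refine this.congr ?_
  intro x
  rw [Real.rpow_one]
  ring_nf

lemma aux_tendTop : Tendsto (fun x : ℝ => |x| * rexp (-x^2/2)) atTop (𝓝 0) :=
  aux_tend.mono_left (by rw [cocompact_eq_atBot_atTop]; exact le_sup_right)

lemma aux_tendBot : Tendsto (fun x : ℝ => |x| * rexp (-x^2/2)) atBot (𝓝 0) :=
  aux_tend.mono_left (by rw [cocompact_eq_atBot_atTop]; exact le_sup_left)

lemma aux_deriv (x : ℝ) :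
    HasDerivAt (fun y : ℝ => -y * rexp (-y^2/2)) ((x^2 - 1) * rexp (-x^2/2)) x := by
  have h1 : HasDerivAt (fun y : ℝ => -y^2/2) (-x) x := by
    have := ((hasDerivAt_pow 2 x).neg.div_const 2)
    refine this.congr_deriv ?_
    push_cast; ring
  have h3 := ((hasDerivAt_id x).neg).mul h1.exp
  refine h3.congr_deriv ?_
  simp [id]
  ring

lemma aux_fTop : Tendsto (fun y : ℝ => -y * rexp (-y^2/2)) atTop (𝓝 0) := by
  apply squeeze_zero_norm (a := fun x : ℝ => |x| * rexp (-x^2/2)) (fun x => le_of_eq ?_) aux_tendTop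
  rw [norm_mul, Real.norm_eq_abs, Real.norm_eq_abs, abs_neg, Real.abs_exp]

lemma aux_fBot : Tendsto (fun y : ℝ => -y * rexp (-y^2/2)) atBot (𝓝 0) := by
  apply squeeze_zero_norm (a := fun x : ℝ => |x| * rexp (-x^2/2)) (fun x => le_of_eq ?_) aux_tendBot
  rw [norm_mul, Real.norm_eq_abs, Real.norm_eq_abs, abs_neg, Real.abs_exp]

lemma aux_x2_exp_eval : (∫ x : ℝ, x^2 * rexp (-x^2/2)) = Real.sqrt (2*π) := by
  have hint : Integrable (fun x : ℝ => (x^2 - 1) * rexp (-x^2/2)) := by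
    have := aux_x2_exp_int.sub aux_exp_int
    refine this.congr ?_
    filter_upwards with x
    simp only [Pi.sub_apply]
    ring
  have hIoi : (∫ x in Set.Ioi (0:ℝ), (x^2 - 1) * rexp (-x^2/2)) = 0 := by
    have := integral_Ioi_of_hasDerivAt_of_tendsto' (a := 0) (m := 0)
      (fun x _ => aux_deriv x) hint.integrableOn aux_fTop
    simpa using this
  have hIic : (∫ x in Set.Iic (0:ℝ), (x^2 - 1) * rexp (-x^2/2)) = 0 := by
    have := integral_Iic_of_hasDerivAt_of_tendsto' (a := 0) (m := 0)
      (fun x _ => aux_deriv x) hint.integrableOn aux_fBot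
    simpa using this
  have htot : (∫ x : ℝ, (x^2 - 1) * rexp (-x^2/2)) = 0 := by
    rw [← intervalIntegral.integral_Iic_add_Ioi (b := (0:ℝ)) hint.integrableOn hint.integrableOn, hIoi, hIic,
      add_zero]
  have hsub := integral_sub aux_x2_exp_int aux_exp_int
  have : (∫ x : ℝ, (x^2 * rexp (-x^2/2) - rexp (-x^2/2))) = 0 := by
    rw [← htot]
    congr 1 with x
    ring
  rw [hsub] at this
  have := sub_eq_zero.mp this
  rw [this, aux_exp_eval]

lemma aux_derivF (x : ℝ) :
    HasDerivAt (fun y : ℝ => -rexp (-y^2/2)) (x * rexp (-x^2/2)) x := by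
  have h1 : HasDerivAt (fun y : ℝ => -y^2/2) (-x) x := by
    have := ((hasDerivAt_pow 2 x).neg.div_const 2)
    refine this.congr_deriv ?_
    push_cast; ring
  have h3 := h1.exp.neg
  refine h3.congr_deriv ?_
  ring

lemma aux_FTop : Tendsto (fun y : ℝ => -rexp (-y^2/2)) atTop (𝓝 0) := by
  apply squeeze_zero_norm' (a := fun x : ℝ => |x| * rexp (-x^2/2)) _ aux_tendTop
  filter_upwards [eventually_ge_atTop (1:ℝ)] with x hx
  rw [norm_neg, Real.norm_eq_abs, Real.abs_exp]
  nlinarith [Real.exp_pos (-x^2/2), abs_of_nonneg (le_trans zero_le_one hx)]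

lemma aux_FBot : Tendsto (fun y : ℝ => -rexp (-y^2/2)) atBot (𝓝 0) := by
  apply squeeze_zero_norm' (a := fun x : ℝ => |x| * rexp (-x^2/2)) _ aux_tendBot
  filter_upwards [eventually_le_atBot (-1:ℝ)] with x hx
  rw [norm_neg, Real.norm_eq_abs, Real.abs_exp]
  nlinarith [Real.exp_pos (-x^2/2), abs_of_nonpos (le_trans hx (by norm_num))]

lemma aux_x_exp_eval : (∫ x : ℝ, x * rexp (-x^2/2)) = 0 := by
  have hIoi : (∫ x in Set.Ioi (0:ℝ), x * rexp (-x^2/2)) = 1 := by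
    have := integral_Ioi_of_hasDerivAt_of_tendsto' (a := 0) (m := 0)
      (fun x _ => aux_derivF x) aux_x_exp_int.integrableOn aux_FTop
    simpa using this
  have hIic : (∫ x in Set.Iic (0:ℝ), x * rexp (-x^2/2)) = -1 := by
    have := integral_Iic_of_hasDerivAt_of_tendsto' (a := 0) (m := 0)
      (fun x _ => aux_derivF x) aux_x_exp_int.integrableOn aux_FBot
    simpa using this
  rw [← intervalIntegral.integral_Iic_add_Ioi (b := (0:ℝ)) aux_x_exp_int.integrableOn
    aux_x_exp_int.integrableOn, hIoi, hIic]
  ring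

lemma aux_pdf_eq : gaussianPDFReal 0 1 = fun x => (Real.sqrt (2*π))⁻¹ * rexp (-x^2/2) := by
  funext x
  simp [gaussianPDFReal]

lemma aux_gauss_int (g : ℝ → ℝ) :
    ∫ x, g x ∂(gaussianReal 0 1) = ∫ x, gaussianPDFReal 0 1 x * g x := by
  rw [gaussianReal_of_var_ne_zero _ one_ne_zero]
  have h : (gaussianPDF 0 1)
      = fun x => ((Real.toNNReal (gaussianPDFReal 0 1 x) : NNReal) : ENNReal) := rfl
  rw [h, integral_withDensity_eq_integral_smul
    ((measurable_gaussianPDFReal 0 1).real_toNNReal) g]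
  congr 1 with x
  simp [NNReal.smul_def, Real.coe_toNNReal _ (gaussianPDFReal_nonneg 0 1 x)]

lemma aux_sqrt_ne : Real.sqrt (2*π) ≠ 0 := by
  positivity

lemma aux_gauss_mean : ∫ x, x ∂(gaussianReal 0 1) = 0 := by
  rw [aux_gauss_int, aux_pdf_eq]
  have : (∫ x : ℝ, (Real.sqrt (2*π))⁻¹ * rexp (-x^2/2) * x)
      = (Real.sqrt (2*π))⁻¹ * ∫ x : ℝ, x * rexp (-x^2/2) := by
    rw [← integral_const_mul]
    congr 1 with x
    ring
  rw [this, aux_x_exp_eval, mul_zero]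

lemma aux_gauss_sq : ∫ x, x^2 ∂(gaussianReal 0 1) = 1 := by
  rw [aux_gauss_int, aux_pdf_eq]
  have : (∫ x : ℝ, (Real.sqrt (2*π))⁻¹ * rexp (-x^2/2) * x^2)
      = (Real.sqrt (2*π))⁻¹ * ∫ x : ℝ, x^2 * rexp (-x^2/2) := by
    rw [← integral_const_mul]
    congr 1 with x
    ring
  rw [this, aux_x2_exp_eval, inv_mul_cancel₀ aux_sqrt_ne]

lemma aux_memℒp_id : MemLp (id : ℝ → ℝ) 2 (gaussianReal 0 1) := by
  rw [memLp_two_iff_integrable_sq aestronglyMeasurable_id]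
  rw [gaussianReal_of_var_ne_zero _ one_ne_zero]
  have h : (gaussianPDF 0 1)
      = fun x => ((Real.toNNReal (gaussianPDFReal 0 1 x) : NNReal) : ENNReal) := rfl
  rw [h, integrable_withDensity_iff_integrable_smul
    ((measurable_gaussianPDFReal 0 1).real_toNNReal)]
  have : Integrable (fun x : ℝ => (Real.sqrt (2*π))⁻¹ * (x^2 * rexp (-x^2/2))) :=
    aux_x2_exp_int.const_mul _
  refine this.congr ?_
  filter_upwards with x
  rw [NNReal.smul_def, Real.coe_toNNReal _ (gaussianPDFReal_nonneg 0 1 x), aux_pdf_eq]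
  simp only [id_eq, smul_eq_mul]
  ring

section RV
variable {Ω : Type*} [MeasureSpace Ω]

lemma rv_memℒp (X : Ω → ℝ) (hm : Measurable X) (hd : Measure.map X ℙ = gaussianReal 0 1) :
    MemLp X 2 ℙ := by
  have h := aux_memℒp_id
  rw [← hd] at h
  exact (memLp_map_measure_iff aestronglyMeasurable_id hm.aemeasurable).mp h

lemma rv_mean (X : Ω → ℝ) (hm : Measurable X) (hd : Measure.map X ℙ = gaussianReal 0 1) :
    ∫ ω, X ω ∂ℙ = 0 := by
  have h : ∫ ω, X ω ∂ℙ = ∫ x, x ∂(Measure.map X ℙ) :=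
    (integral_map hm.aemeasurable aestronglyMeasurable_id).symm
  rw [h, hd, aux_gauss_mean]

lemma rv_sq (X : Ω → ℝ) (hm : Measurable X) (hd : Measure.map X ℙ = gaussianReal 0 1) :
    ∫ ω, (X ω)^2 ∂ℙ = 1 := by
  have h : ∫ ω, (X ω)^2 ∂ℙ = ∫ x, x^2 ∂(Measure.map X ℙ) :=
    (integral_map hm.aemeasurable
      (measurable_id.pow_const 2).aestronglyMeasurable).symm
  rw [h, hd, aux_gauss_sq]

lemma rv_var [IsProbabilityMeasure (ℙ : Measure Ω)] (X : Ω → ℝ) (hm : Measurable X)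
    (hd : Measure.map X ℙ = gaussianReal 0 1) : variance X ℙ = 1 := by
  rw [variance_eq_sub (rv_memℒp X hm hd)]
  have h1 : (∫ ω, (X ^ 2) ω ∂ℙ) = 1 := by
    simpa [Pi.pow_apply] using rv_sq X hm hd
  have h2 := rv_mean X hm hd
  simp only [h1]
  rw [h2]
  norm_num

end RV

lemma aux_series (α β γ : ℝ) (hα : |α| < 1) (hγ : |γ| < 1) (hαγ : α ≠ γ) :
    Tendsto (fun n : ℕ => ∑ k ∈ Finset.range n, (γ ^ k) ^ 2
        + ∑ k ∈ Finset.range n, (β * ((α ^ (k+1) - γ ^ (k+1)) / (α - γ))) ^ 2) atTop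
      (𝓝 (1 / (1 - γ ^ 2) + β ^ 2 * (1 + α * γ) / ((1 - α ^ 2) * (1 - α * γ) * (1 - γ ^ 2)))) := by
  have hγ2 : |γ ^ 2| < 1 := by rw [abs_pow, sq_abs]; nlinarith [abs_nonneg γ, hγ, sq_abs γ]
  have hα2 : |α ^ 2| < 1 := by rw [abs_pow, sq_abs]; nlinarith [abs_nonneg α, hα, sq_abs α]
  have hag : |α * γ| < 1 := by rw [abs_mul]; nlinarith [abs_nonneg α, abs_nonneg γ]
  have hsub : α - γ ≠ 0 := sub_ne_zero.mpr hαγ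
  have hd1 : 1 - γ ^ 2 ≠ 0 := by
    have := abs_lt.mp hγ2; intro h; nlinarith [this.1, this.2]
  have hd2 : 1 - α ^ 2 ≠ 0 := by
    have := abs_lt.mp hα2; intro h; nlinarith [this.1, this.2]
  have hd3 : 1 - α * γ ≠ 0 := by
    have := abs_lt.mp hag; intro h; nlinarith [this.1, this.2]
  have h1 : HasSum (fun k : ℕ => (γ ^ 2) ^ k) (1 - γ ^ 2)⁻¹ :=
    hasSum_geometric_of_abs_lt_one hγ2
  have h2 : HasSum (fun k : ℕ => (α ^ 2) ^ k) (1 - α ^ 2)⁻¹ :=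
    hasSum_geometric_of_abs_lt_one hα2
  have h3 : HasSum (fun k : ℕ => (α * γ) ^ k) (1 - α * γ)⁻¹ :=
    hasSum_geometric_of_abs_lt_one hag
  have hA : HasSum (fun k : ℕ => (γ ^ k) ^ 2) (1 - γ ^ 2)⁻¹ := by
    have heq : (fun k : ℕ => (γ ^ k) ^ 2) = fun k : ℕ => (γ ^ 2) ^ k := by
      funext k; rw [← pow_mul, ← pow_mul, mul_comm]
    rw [heq]; exact h1
  have hcomb : HasSum
      (fun k : ℕ => β ^ 2 / (α - γ) ^ 2 *
        (α ^ 2 * (α ^ 2) ^ k + γ ^ 2 * (γ ^ 2) ^ k - 2 * (α * γ) * (α * γ) ^ k))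
      (β ^ 2 / (α - γ) ^ 2 *
        (α ^ 2 * (1 - α ^ 2)⁻¹ + γ ^ 2 * (1 - γ ^ 2)⁻¹ - 2 * (α * γ) * (1 - α * γ)⁻¹)) :=
    (((h2.mul_left (α ^ 2)).add (h1.mul_left (γ ^ 2))).sub
      (h3.mul_left (2 * (α * γ)))).mul_left _
  have hB : HasSum (fun k : ℕ => (β * ((α ^ (k+1) - γ ^ (k+1)) / (α - γ))) ^ 2)
      (β ^ 2 / (α - γ) ^ 2 *
        (α ^ 2 * (1 - α ^ 2)⁻¹ + γ ^ 2 * (1 - γ ^ 2)⁻¹ - 2 * (α * γ) * (1 - α * γ)⁻¹)) := by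
    refine HasSum.congr_fun hcomb ?_ -- maybe wrong name
    intro k
    have e1 : (α ^ 2) ^ k = (α ^ k) ^ 2 := by rw [← pow_mul, ← pow_mul, mul_comm]
    have e2 : (γ ^ 2) ^ k = (γ ^ k) ^ 2 := by rw [← pow_mul, ← pow_mul, mul_comm]
    rw [e1, e2, mul_pow, pow_succ, pow_succ]
    field_simp
    try ring
    try tauto
  have := hA.tendsto_sum_nat.add hB.tendsto_sum_nat
  convert this using 2
  field_simp
  ring_nf
  field_simp
  ring

/-- For jointly independent i.i.d. standard Gaussian families
`(EX t)` and `(EY t)`, `|α| < 1`, `|γ| < 1`, `α ≠ γ`, the stationary solution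
`Y (t+1) = ∑_{k ≥ 0} γ ^ k * EY (t - k)
  + β * ∑_{k ≥ 0} ((α^(k+1) - γ^(k+1)) / (α - γ)) * EX (t - 1 - k)`
(series converging in `L²`) has variance
`𝕍[Y (t+1)] = 1/(1-γ²) + β² (1 + αγ) / ((1-α²)(1-αγ)(1-γ²))`. -/
theorem stmt_2 {Ω : Type*} [MeasureSpace Ω] [IsProbabilityMeasure (ℙ : Measure Ω)]
    (EX EY : ℤ → Ω → ℝ)
    (hEXmeas : ∀ t, Measurable (EX t)) (hEYmeas : ∀ t, Measurable (EY t))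
    (hindep : iIndepFun (Sum.elim EX EY) ℙ)
    (hEXdist : ∀ t, Measure.map (EX t) ℙ = gaussianReal 0 1)
    (hEYdist : ∀ t, Measure.map (EY t) ℙ = gaussianReal 0 1)
    (α β γ : ℝ) (hα : |α| < 1) (hγ : |γ| < 1) (hαγ : α ≠ γ)
    (Y : ℤ → Ω → ℝ) (hYmeas : ∀ t, Measurable (Y t))
    (hY : ∀ t : ℤ, Tendsto (fun n : ℕ =>
        eLpNorm (fun ω => Y (t + 1) ω -
          (∑ k ∈ Finset.range n, γ ^ k * EY (t - k) ω
            + β * ∑ k ∈ Finset.range n,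
                ((α ^ (k + 1) - γ ^ (k + 1)) / (α - γ)) * EX (t - 1 - k) ω)) 2 ℙ)
      atTop (nhds 0)) :
    ∀ t : ℤ, variance (Y (t + 1)) ℙ =
      1 / (1 - γ ^ 2) + β ^ 2 * (1 + α * γ) / ((1 - α ^ 2) * (1 - α * γ) * (1 - γ ^ 2)) := by
  intro t
  have memEX : ∀ s : ℤ, MemLp (EX s) 2 ℙ := fun s => rv_memℒp _ (hEXmeas s) (hEXdist s)
  have memEY : ∀ s : ℤ, MemLp (EY s) 2 ℙ := fun s => rv_memℒp _ (hEYmeas s) (hEYdist s)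
  set S : ℕ → Ω → ℝ := fun n ω => ∑ k ∈ Finset.range n, γ ^ k * EY (t - k) ω
      + β * ∑ k ∈ Finset.range n,
          ((α ^ (k + 1) - γ ^ (k + 1)) / (α - γ)) * EX (t - 1 - k) ω with hSdef
  have hYt : Tendsto (fun n : ℕ => eLpNorm (fun ω => Y (t + 1) ω - S n ω) 2 ℙ)
      atTop (𝓝 0) := by
    rw [hSdef]; exact hY t
  -- measurability and Memℒp of S n
  have Smeas : ∀ n, Measurable (S n) := by
    intro n
    rw [hSdef]
    exact (Finset.measurable_sum _ fun k _ => (hEYmeas _).const_mul _).add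
      ((Finset.measurable_sum _ fun k _ => (hEXmeas _).const_mul _).const_mul β)
  have memS : ∀ n, MemLp (S n) 2 ℙ := by
    intro n
    rw [hSdef]
    exact (memLp_finset_sum _ fun k _ => (memEY _).const_mul _).add
      ((memLp_finset_sum _ fun k _ => (memEX _).const_mul _).const_mul β)
  -- mean of S n is zero
  have intS : ∀ n, (∫ ω, S n ω ∂ℙ) = 0 := by
    intro n
    rw [hSdef]
    simp only
    rw [integral_add (integrable_finset_sum _ fun k _ =>
        (((memEY _).integrable one_le_two).const_mul _))
      ((integrable_finset_sum _ fun k _ =>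
        (((memEX _).integrable one_le_two).const_mul _)).const_mul β),
      integral_finset_sum _ fun k _ => (((memEY _).integrable one_le_two).const_mul _),
      integral_const_mul, integral_finset_sum _ fun k _ =>
        (((memEX _).integrable one_le_two).const_mul _)]
    simp only [integral_const_mul]
    have hY0 : ∀ k : ℕ, (∫ ω, EY (t - k) ω ∂ℙ) = 0 :=
      fun k => rv_mean _ (hEYmeas _) (hEYdist _)
    have hX0 : ∀ k : ℕ, (∫ ω, EX (t - 1 - k) ω ∂ℙ) = 0 :=
      fun k => rv_mean _ (hEXmeas _) (hEXdist _)
    simp [hY0, hX0]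
  -- variance of S n
  set W : ℕ ⊕ ℕ → Ω → ℝ := Sum.elim (fun k ω => γ ^ k * EY (t - k) ω)
      (fun k ω => (β * ((α ^ (k + 1) - γ ^ (k + 1)) / (α - γ))) * EX (t - 1 - k) ω)
    with hWdef
  have memW : ∀ i, MemLp (W i) 2 ℙ := by
    rintro (k | k)
    · exact (memEY _).const_mul _
    · exact (memEX _).const_mul _
  have hpair : ∀ i j : ℕ ⊕ ℕ, i ≠ j → IndepFun (W i) (W j) ℙ := by
    have base : ∀ u v : ℤ ⊕ ℤ, u ≠ v →
        IndepFun (Sum.elim EX EY u) (Sum.elim EX EY v) ℙ :=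
      fun u v huv => hindep.indepFun huv
    rintro (k | k) (l | l) hij
    · have hkl : (Sum.inr (t - k) : ℤ ⊕ ℤ) ≠ Sum.inr (t - l) := by
        simp only [ne_eq, Sum.inr.injEq]
        intro h; apply hij; simp only [ne_eq, Sum.inl.injEq]; omega
      exact (base _ _ hkl).comp (measurable_id.const_mul _) (measurable_id.const_mul _)
    · have hkl : (Sum.inr (t - k) : ℤ ⊕ ℤ) ≠ Sum.inl (t - 1 - l) := by simp
      exact (base _ _ hkl).comp (measurable_id.const_mul _) (measurable_id.const_mul _)
    · have hkl : (Sum.inl (t - 1 - k) : ℤ ⊕ ℤ) ≠ Sum.inr (t - l) := by simp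
      exact (base _ _ hkl).comp (measurable_id.const_mul _) (measurable_id.const_mul _)
    · have hkl : (Sum.inl (t - 1 - k) : ℤ ⊕ ℤ) ≠ Sum.inl (t - 1 - l) := by
        simp only [ne_eq, Sum.inl.injEq]
        intro h; apply hij; simp only [ne_eq, Sum.inr.injEq]; omega
      exact (base _ _ hkl).comp (measurable_id.const_mul _) (measurable_id.const_mul _)
  have hSW : ∀ n, S n = ∑ i ∈ (Finset.range n).disjSum (Finset.range n), W i := by
    intro n
    funext ω
    rw [hSdef, hWdef]
    simp only [Finset.sum_apply, Finset.sum_disjSum, Sum.elim_inl, Sum.elim_inr]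
    rw [Finset.mul_sum]
    congr 1
    refine Finset.sum_congr rfl fun k _ => by ring
  have varS : ∀ n, variance (S n) ℙ = ∑ k ∈ Finset.range n, (γ ^ k) ^ 2
      + ∑ k ∈ Finset.range n, (β * ((α ^ (k + 1) - γ ^ (k + 1)) / (α - γ))) ^ 2 := by
    intro n
    rw [hSW n, IndepFun.variance_sum (fun i _ => memW i)
      (fun i _ j _ hij => hpair i j hij)]
    rw [Finset.sum_disjSum]
    congr 1
    · refine Finset.sum_congr rfl fun k _ => ?_
      rw [hWdef]
      simp only [Sum.elim_inl]
      rw [variance_const_mul, rv_var _ (hEYmeas _) (hEYdist _), mul_one]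
    · refine Finset.sum_congr rfl fun k _ => ?_
      rw [hWdef]
      simp only [Sum.elim_inr]
      rw [variance_const_mul, rv_var _ (hEXmeas _) (hEXdist _), mul_one]
  have hVarTendsto : Tendsto (fun n => variance (S n) ℙ) atTop
      (𝓝 (1 / (1 - γ ^ 2) + β ^ 2 * (1 + α * γ) / ((1 - α ^ 2) * (1 - α * γ) * (1 - γ ^ 2)))) := by
    have := aux_series α β γ hα hγ hαγ
    exact this.congr fun n => (varS n).symm
  -- Y is in L²
  have hmemY : MemLp (Y (t + 1)) 2 ℙ := by
    obtain ⟨N, hN⟩ := (hYt.eventually_lt_const (by norm_num : (0 : ℝ≥0∞) < 1)).exists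
    have hsub : MemLp (fun ω => Y (t + 1) ω - S N ω) 2 ℙ :=
      ⟨((hYmeas (t + 1)).sub (Smeas N)).aestronglyMeasurable, hN.trans_le le_top⟩
    have hadd := hsub.add (memS N)
    have heq : (fun ω => (Y (t + 1) ω - S N ω) + S N ω) = Y (t + 1) := by
      funext ω; ring
    rw [← heq]
    exact hadd
  -- mean of Y is zero
  have hL1 : Tendsto (fun n => eLpNorm (S n - Y (t + 1)) 1 ℙ) atTop (𝓝 0) := by
    refine tendsto_of_tendsto_of_tendsto_of_le_of_le tendsto_const_nhds hYt
      (fun n => zero_le) (fun n => ?_)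
    have h2 : eLpNorm (S n - Y (t + 1)) 2 ℙ
        = eLpNorm (fun ω => Y (t + 1) ω - S n ω) 2 ℙ := by
      rw [show (S n - Y (t + 1)) = -(fun ω => Y (t + 1) ω - S n ω) by
        funext ω; simp [Pi.sub_apply], eLpNorm_neg]
    rw [← h2]
    exact eLpNorm_le_eLpNorm_of_exponent_le (by norm_num)
      ((Smeas n).sub (hYmeas _)).aestronglyMeasurable
  have hmeanY : (∫ ω, Y (t + 1) ω ∂ℙ) = 0 := by
    have hT := tendsto_integral_of_L1' (Y (t + 1)) (hmemY.integrable one_le_two).aestronglyMeasurable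
      (Eventually.of_forall fun n => (memS n).integrable one_le_two) hL1
    have h0 : Tendsto (fun _ : ℕ => (0 : ℝ)) atTop (𝓝 (∫ ω, Y (t + 1) ω ∂ℙ)) :=
      hT.congr fun n => intS n
    exact (tendsto_nhds_unique h0 tendsto_const_nhds)
  -- Lp convergence
  set YL : Lp ℝ 2 (ℙ : Measure Ω) := hmemY.toLp _ with hYL
  set SL : ℕ → Lp ℝ 2 (ℙ : Measure Ω) := fun n => (memS n).toLp _ with hSL
  have hnormeq : ∀ n, ‖SL n - YL‖
      = (eLpNorm (fun ω => Y (t + 1) ω - S n ω) 2 ℙ).toReal := by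
    intro n
    have hsl : SL n - YL = ((memS n).sub hmemY).toLp (S n - Y (t + 1)) := by
      rw [hSL, hYL]
      exact MemLp.toLp_sub (memS n) hmemY
    rw [hsl, Lp.norm_toLp _]
    congr 1
    rw [show (S n - Y (t + 1)) = -(fun ω => Y (t + 1) ω - S n ω) by
      funext ω; simp [Pi.sub_apply], eLpNorm_neg]
  have hnorm : Tendsto (fun n => ‖SL n - YL‖) atTop (𝓝 0) := by
    have hto := (ENNReal.tendsto_toReal (by simp : (0 : ℝ≥0∞) ≠ ⊤)).comp hYt
    simp only [ENNReal.toReal_zero] at hto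
    exact hto.congr fun n => (hnormeq n).symm
  have hSLconv : Tendsto SL atTop (𝓝 YL) := tendsto_iff_norm_sub_tendsto_zero.mpr hnorm
  have hinner : Tendsto (fun n => (inner ℝ (SL n) (SL n) : ℝ)) atTop
      (𝓝 (inner ℝ YL YL : ℝ)) := hSLconv.inner hSLconv
  have hinnS : ∀ n, (inner ℝ (SL n) (SL n) : ℝ) = ∫ ω, S n ω * S n ω ∂ℙ := by
    intro n
    rw [hSL, L2.inner_def]
    refine integral_congr_ae ?_
    filter_upwards [(memS n).coeFn_toLp] with ω hω
    simp [hω, RCLike.inner_apply, sq]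
  have hinnY : (inner ℝ YL YL : ℝ) = ∫ ω, Y (t + 1) ω * Y (t + 1) ω ∂ℙ := by
    rw [hYL, L2.inner_def]
    refine integral_congr_ae ?_
    filter_upwards [hmemY.coeFn_toLp] with ω hω
    simp [hω, RCLike.inner_apply, sq]
  have hVarS_inner : ∀ n, variance (S n) ℙ = (inner ℝ (SL n) (SL n) : ℝ) := by
    intro n
    rw [variance_eq_sub (memS n), hinnS n]
    have hpow : (∫ ω, (S n ^ 2) ω ∂ℙ) = ∫ ω, S n ω * S n ω ∂ℙ := by
      refine integral_congr_ae (Eventually.of_forall fun ω => ?_)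
      simp [pow_two]
    rw [hpow, intS n]
    ring
  have hVarY_inner : variance (Y (t + 1)) ℙ = (inner ℝ YL YL : ℝ) := by
    rw [variance_eq_sub hmemY, hinnY]
    have hpow : (∫ ω, (Y (t + 1) ^ 2) ω ∂ℙ) = ∫ ω, Y (t + 1) ω * Y (t + 1) ω ∂ℙ := by
      refine integral_congr_ae (Eventually.of_forall fun ω => ?_)
      simp [pow_two]
    rw [hpow, hmeanY]
    ring
  have hfinal : Tendsto (fun n => variance (S n) ℙ) atTop (𝓝 (variance (Y (t + 1)) ℙ)) := by
    rw [hVarY_inner]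
    exact hinner.congr fun n => (hVarS_inner n).symm
  exact tendsto_nhds_unique hfinal hVarTendsto
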